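/- Define x, y, z ∈ Equiv.Perm (ZMod 2)⟦X⟧ by x = B⁻¹ ∘ A, y = C⁻¹ ∘ A, z = D⁻¹ ∘ A (so x(h) = B⁻¹(A(h)), etc.). Then x is the translation h ↦ h + X·(1+X+X²)⁻¹, y is the translation h ↦ h + (1+X+X²)⁻¹, z is the translation h ↦ h + (1+X)·(1+X+X²)⁻¹; moreover y = x ∘ z = z ∘ x, x² = z² = 1, and the subgroup of Equiv.Perm (ZMod 2)⟦X⟧ generated by x and z is isomorphic to the Klein four-group ZMod 2 × ZMod 2. -/

import Mathlib

open PowerSeries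

noncomputable section

/-- The ring of formal power series over the field with two elements. -/
abbrev R : Type := PowerSeries (ZMod 2)

/-- The multiplier `f = (1+X+X²)·(1+X²)⁻¹`. -/
def f : R := (1 + X + X ^ 2) * (1 + X ^ 2)⁻¹

/-- `g_a = ((1+X)⁻¹)³`. -/
def ga : R := ((1 + X)⁻¹) ^ 3

/-- `g_b = (1+X+X²)·((1+X)⁻¹)³`. -/
def gb : R := (1 + X + X ^ 2) * ((1 + X)⁻¹) ^ 3

/-- `g_c = X·((1+X)⁻¹)³`. -/
def gc : R := X * ((1 + X)⁻¹) ^ 3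

/-- `g_d = X²·((1+X)⁻¹)³`. -/
def gd : R := X ^ 2 * ((1 + X)⁻¹) ^ 3

lemma constantCoeff_f_ne_zero : constantCoeff (R := ZMod 2) f ≠ 0 := by
  simp [f, map_mul, map_add, map_pow, PowerSeries.constantCoeff_inv]

/-- `f` as a unit of `R`. -/
def fU : Rˣ := Units.mkOfMulEqOne f f⁻¹ (PowerSeries.mul_inv_cancel f constantCoeff_f_ne_zero)

/-- The affine bijection `h ↦ h·u + g` for a unit `u` and `g : R`. -/
def affine (u : Rˣ) (g : R) : Equiv.Perm R := (Units.mulRight u).trans (Equiv.addRight g)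

@[simp] lemma affine_apply (u : Rˣ) (g h : R) : affine u g h = h * u + g := rfl

/-- The affine bijection `A : h ↦ h·f + g_a`. -/
def A : Equiv.Perm R := affine fU ga

/-- The affine bijection `B : h ↦ h·f + g_b`. -/
def B : Equiv.Perm R := affine fU gb

/-- The affine bijection `C : h ↦ h·f + g_c`. -/
def C : Equiv.Perm R := affine fU gc

/-- The affine bijection `D : h ↦ h·f + g_d`. -/
def D : Equiv.Perm R := affine fU gd

end
noncomputable section

/-- `x = B⁻¹ ∘ A` (so `x h = B⁻¹ (A h)`). -/
def x : Equiv.Perm R := B⁻¹ * A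

/-- `y = C⁻¹ ∘ A` (so `y h = C⁻¹ (A h)`). -/
def y : Equiv.Perm R := _root_.C⁻¹ * A

/-- `z = D⁻¹ ∘ A` (so `z h = D⁻¹ (A h)`). -/
def z : Equiv.Perm R := D⁻¹ * A

/- ### Auxiliary lemmas -/

lemma two_eq_zero : (2 : R) = 0 := by
  rw [show (2:R) = PowerSeries.C (R := ZMod 2) 2 from (map_ofNat _ 2).symm,
    show (2:ZMod 2) = 0 from rfl, map_zero]

lemma hhr : ((1:R) + X) * (1 + X)⁻¹ = 1 := by apply PowerSeries.mul_inv_cancel; simp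

lemma hhs : ((1:R) + X + X^2) * (1 + X + X^2)⁻¹ = 1 := by
  apply PowerSeries.mul_inv_cancel; simp

lemma hhq : ((1:R) + X^2) * (1 + X^2)⁻¹ = 1 := by apply PowerSeries.mul_inv_cancel; simp

lemma s_ne : ((1:R) + X + X^2)⁻¹ ≠ 0 := by
  intro h; have := hhs; rw [h, mul_zero] at this; exact zero_ne_one this

lemma tX_ne : (X:R) * (1 + X + X^2)⁻¹ ≠ 0 :=
  mul_ne_zero PowerSeries.X_ne_zero s_ne

lemma r_ne : ((1:R) + X) ≠ 0 := by
  intro h; have := hhr; rw [h, zero_mul] at this; exact zero_ne_one this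

lemma tZ_ne : ((1:R) + X) * (1 + X + X^2)⁻¹ ≠ 0 := mul_ne_zero r_ne s_ne

lemma tXtZ_sum :
    (X:R) * (1 + X + X^2)⁻¹ + ((1:R) + X) * (1 + X + X^2)⁻¹ = (1 + X + X^2)⁻¹ := by
  linear_combination (X * ((1:R) + X + X^2)⁻¹) * two_eq_zero

lemma val_fU : (fU : R) = f := rfl

lemma x_apply (h : R) : x h = h + X * (1 + X + X ^ 2)⁻¹ := by
  rw [x, Equiv.Perm.mul_apply, Equiv.Perm.inv_def, Equiv.symm_apply_eq]
  show h * (fU : R) + ga = (h + X * (1 + X + X ^ 2)⁻¹) * (fU : R) + gb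
  rw [val_fU]
  simp only [f, ga, gb]
  set s : R := (1 + X + X^2)⁻¹
  set qi : R := (1 + X^2)⁻¹
  set ri : R := (1 + X)⁻¹
  linear_combination (-(X:R)*ri^2 - X*qi*(((1:R)+X)*ri+1))*hhr + (-(X:R)*qi)*hhs +
    ((X:R)*ri^2)*hhq + ((X:R)^2*qi*ri^2 - X*qi)*two_eq_zero

lemma y_apply (h : R) : y h = h + (1 + X + X ^ 2)⁻¹ := by
  rw [y, Equiv.Perm.mul_apply, Equiv.Perm.inv_def, Equiv.symm_apply_eq]
  show h * (fU : R) + ga = (h + (1 + X + X ^ 2)⁻¹) * (fU : R) + gc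
  rw [val_fU]
  simp only [f, ga, gc]
  set s : R := (1 + X + X^2)⁻¹
  set qi : R := (1 + X^2)⁻¹
  set ri : R := (1 + X)⁻¹
  linear_combination (ri^2 + qi*(((1:R)+X)*ri+1))*hhr + (-qi)*hhs + (-ri^2)*hhq +
    (-(X:R)*qi*ri^2 - X*ri^3)*two_eq_zero

lemma z_apply (h : R) : z h = h + (1 + X) * (1 + X + X ^ 2)⁻¹ := by
  rw [z, Equiv.Perm.mul_apply, Equiv.Perm.inv_def, Equiv.symm_apply_eq]
  show h * (fU : R) + ga = (h + (1 + X) * (1 + X + X ^ 2)⁻¹) * (fU : R) + gd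
  rw [val_fU]
  simp only [f, ga, gd]
  set s : R := (1 + X + X^2)⁻¹
  set qi : R := (1 + X^2)⁻¹
  set ri : R := (1 + X)⁻¹
  linear_combination (ri*(((1:R)+X)*ri+1) + ((1:R)+X)*qi)*hhr + (-((1:R)+X)*qi)*hhs +
    (-ri)*hhq + (-((X:R)+X^2)*ri^3 - X*qi*ri)*two_eq_zero

lemma x_eq : x = Equiv.addRight ((X:R) * (1 + X + X ^ 2)⁻¹) :=
  Equiv.ext fun h => x_apply h

lemma y_eq : y = Equiv.addRight (((1:R) + X + X ^ 2)⁻¹) :=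
  Equiv.ext fun h => y_apply h

lemma z_eq : z = Equiv.addRight (((1:R) + X) * (1 + X + X ^ 2)⁻¹) :=
  Equiv.ext fun h => z_apply h

lemma addRight_mul (a b : R) :
    Equiv.addRight a * Equiv.addRight b = Equiv.addRight (a + b) := by
  ext h
  simp only [Equiv.Perm.mul_apply, Equiv.coe_addRight]
  ring

lemma addRight_congr {a b : R} (h : a = b) : Equiv.addRight a = Equiv.addRight b := by rw [h]

lemma addRight_eq_one_iff (a : R) : Equiv.addRight a = 1 ↔ a = 0 := by
  constructor
  · intro h
    have := congrArg (fun e : Equiv.Perm R => e 0) h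
    simpa using this
  · rintro rfl; ext h; simp

lemma zmod2_cases (c : ZMod 2) : c = 0 ∨ c = 1 := by revert c; decide

/-- The translation vector attached to a pair in `ZMod 2 × ZMod 2`. -/
def vec (p : ZMod 2 × ZMod 2) : R :=
  p.1.val • ((X:R) * (1 + X + X ^ 2)⁻¹) + p.2.val • (((1:R) + X) * (1 + X + X ^ 2)⁻¹)

lemma smul_val_add (c d : ZMod 2) (w : R) :
    ((c + d).val • w : R) = c.val • w + d.val • w := by
  rcases zmod2_cases c with rfl | rfl <;> rcases zmod2_cases d with rfl | rfl <;>
    simp only [show ((0:ZMod 2) + 0 = 0) from rfl, show ((0:ZMod 2) + 1 = 1) from rfl,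
      show ((1:ZMod 2) + 0 = 1) from rfl, show ((1:ZMod 2) + 1 = 0) from rfl,
      ZMod.val_zero, ZMod.val_one, zero_smul, one_smul, add_zero, zero_add] <;>
    first
      | rfl
      | linear_combination (-w) * two_eq_zero

lemma vec_add (a b : ZMod 2 × ZMod 2) : vec (a + b) = vec a + vec b := by
  simp only [vec, Prod.fst_add, Prod.snd_add, smul_val_add]
  ring

/-- The homomorphism from the Klein four-group onto the translations generated by `x, z`. -/
def F : Multiplicative (ZMod 2 × ZMod 2) →* Equiv.Perm R :=
  MonoidHom.mk' (fun p => Equiv.addRight (vec p.toAdd)) (by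
    intro a b
    rw [addRight_mul]
    exact addRight_congr (by rw [← vec_add]; rfl))

lemma F_apply (p : ZMod 2 × ZMod 2) :
    F (Multiplicative.ofAdd p) = Equiv.addRight (vec p) := rfl

lemma vec_10 : vec ((1 : ZMod 2), (0 : ZMod 2)) = (X:R) * (1 + X + X ^ 2)⁻¹ := by
  simp only [vec, ZMod.val_zero, ZMod.val_one, zero_smul, one_smul, add_zero]

lemma vec_01 : vec ((0 : ZMod 2), (1 : ZMod 2)) = ((1:R) + X) * (1 + X + X ^ 2)⁻¹ := by
  simp only [vec, ZMod.val_zero, ZMod.val_one, zero_smul, one_smul, zero_add]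

lemma vec_11 : vec ((1 : ZMod 2), (1 : ZMod 2)) = ((1:R) + X + X ^ 2)⁻¹ := by
  simp only [vec, ZMod.val_one, one_smul]
  exact tXtZ_sum

lemma vec_00 : vec ((0 : ZMod 2), (0 : ZMod 2)) = 0 := by
  simp only [vec, ZMod.val_zero, zero_smul, add_zero]

lemma F_x : F (Multiplicative.ofAdd ((1 : ZMod 2), (0 : ZMod 2))) = x := by
  rw [F_apply, x_eq]; exact addRight_congr vec_10

lemma F_z : F (Multiplicative.ofAdd ((0 : ZMod 2), (1 : ZMod 2))) = z := by
  rw [F_apply, z_eq]; exact addRight_congr vec_01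

lemma F_y : F (Multiplicative.ofAdd ((1 : ZMod 2), (1 : ZMod 2))) = y := by
  rw [F_apply, y_eq]; exact addRight_congr vec_11

lemma F_injective : Function.Injective F := by
  rw [injective_iff_map_eq_one]
  intro a ha
  have ha' : Equiv.addRight (vec a.toAdd) = 1 := ha
  rw [addRight_eq_one_iff] at ha'
  have hmk : a.toAdd = (a.toAdd.1, a.toAdd.2) := rfl
  have hzero : a.toAdd = 0 := by
    rcases zmod2_cases a.toAdd.1 with h1 | h1 <;> rcases zmod2_cases a.toAdd.2 with h2 | h2
    · exact Prod.ext h1 h2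
    · rw [hmk, h1, h2, vec_01] at ha'; exact absurd ha' tZ_ne
    · rw [hmk, h1, h2, vec_10] at ha'; exact absurd ha' tX_ne
    · rw [hmk, h1, h2, vec_11] at ha'; exact absurd ha' s_ne
  have : a = Multiplicative.ofAdd a.toAdd := rfl
  rw [this, hzero]
  rfl

lemma range_eq : F.range = Subgroup.closure ({x, z} : Set (Equiv.Perm R)) := by
  apply le_antisymm
  · rintro _ ⟨p, rfl⟩
    have hx : x ∈ Subgroup.closure ({x, z} : Set (Equiv.Perm R)) :=
      Subgroup.subset_closure (by simp)
    have hz : z ∈ Subgroup.closure ({x, z} : Set (Equiv.Perm R)) :=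
      Subgroup.subset_closure (by simp)
    have hp : p = Multiplicative.ofAdd (p.toAdd.1, p.toAdd.2) := rfl
    rcases zmod2_cases p.toAdd.1 with h1 | h1 <;> rcases zmod2_cases p.toAdd.2 with h2 | h2 <;>
      rw [hp, h1, h2]
    · rw [show (((0:ZMod 2), (0:ZMod 2))) = (0 : ZMod 2 × ZMod 2) from rfl, ofAdd_zero,
        map_one]
      exact one_mem _
    · rw [F_z]; exact hz
    · rw [F_x]; exact hx
    · rw [F_y, show y = x * z by
        rw [x_eq, z_eq, y_eq, addRight_mul]; exact addRight_congr tXtZ_sum.symm]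
      exact mul_mem hx hz
  · rw [Subgroup.closure_le]
    rintro w (rfl | rfl)
    · exact ⟨_, F_x⟩
    · exact ⟨_, F_z⟩

/-- `x`, `y`, `z` are the translations by `X·(1+X+X²)⁻¹`, `(1+X+X²)⁻¹` and `(1+X)·(1+X+X²)⁻¹`
respectively; moreover `y = x ∘ z = z ∘ x`, `x² = z² = 1`, and `⟨x, z⟩` is isomorphic to the
Klein four-group `ZMod 2 × ZMod 2`. -/
theorem klein_subgroup :
    (∀ h : R, x h = h + X * (1 + X + X ^ 2)⁻¹) ∧
    (∀ h : R, y h = h + (1 + X + X ^ 2)⁻¹) ∧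
    (∀ h : R, z h = h + (1 + X) * (1 + X + X ^ 2)⁻¹) ∧
    y = x * z ∧ y = z * x ∧ x ^ 2 = 1 ∧ z ^ 2 = 1 ∧
    Nonempty ((Subgroup.closure ({x, z} : Set (Equiv.Perm R))) ≃*
      Multiplicative (ZMod 2 × ZMod 2)) := by
  refine ⟨x_apply, y_apply, z_apply, ?_, ?_, ?_, ?_, ?_⟩
  · rw [x_eq, z_eq, y_eq, addRight_mul]; exact addRight_congr tXtZ_sum.symm
  · rw [x_eq, z_eq, y_eq, addRight_mul]
    exact addRight_congr (by linear_combination (-(X:R) * (1 + X + X ^ 2)⁻¹) * two_eq_zero)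
  · rw [sq, x_eq, addRight_mul, addRight_eq_one_iff]
    linear_combination ((X:R) * (1 + X + X ^ 2)⁻¹) * two_eq_zero
  · rw [sq, z_eq, addRight_mul, addRight_eq_one_iff]
    linear_combination (((1:R) + X) * (1 + X + X ^ 2)⁻¹) * two_eq_zero
  · exact ⟨(MulEquiv.subgroupCongr range_eq.symm).trans
      (MonoidHom.ofInjective F_injective).symm⟩

end
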